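/- Let (V,H,G) be a hypergram whose context matrix times anticommutation matrix (over 𝔽₂) is zero and whose anticommutation matrix has rank 2n over 𝔽₂. Let x : V → 𝔽₂^{2n} be any family of vectors whose Gram matrix with respect to the standard symplectic form equals the anticommutation matrix, i.e., ⟨x_i, x_j⟩ = G_{i,j} for all i,j ∈ V. Then for every hyperedge h ∈ H, Σ_{v∈h} x_v = 0 in 𝔽₂^{2n}. -/

import Mathlib

open scoped Classical
open Matrix

noncomputable section

/-- The space of `n`-qubit operators, realized as matrices indexed by
`Fin n → Fin 2` (the `n`-fold tensor-product index). -/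
abbrev QMat (n : ℕ) := Matrix (Fin n → Fin 2) (Fin n → Fin 2) ℂ

/-- The four Pauli matrices `I, X, Y, Z`. -/
def pauliMat : Fin 4 → Matrix (Fin 2) (Fin 2) ℂ
  | ⟨0, _⟩ => 1
  | ⟨1, _⟩ => !![0, 1; 1, 0]
  | ⟨2, _⟩ => !![0, -Complex.I; Complex.I, 0]
  | ⟨3, _⟩ => !![1, 0; 0, -1]

/-- The `n`-fold Kronecker (tensor) product `G₁ ⊗ ⋯ ⊗ Gₙ` of the Pauli matrices
selected by `g : Fin n → Fin 4`, as a matrix indexed by `Fin n → Fin 2`. -/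
def nPauli {n : ℕ} (g : Fin n → Fin 4) : QMat n :=
  Matrix.of fun r c => ∏ k, pauliMat (g k) (r k) (c k)

/-- `M` is an `n`-qubit Pauli observable. -/
def IsPauliObs (n : ℕ) (M : QMat n) : Prop := ∃ g : Fin n → Fin 4, M = nPauli g

/-- `I^⊗n`, the `n`-fold tensor product of the identity. -/
def idN (n : ℕ) : QMat n := nPauli (fun _ => ⟨0, by omega⟩)

/-- Product of `f` over a finite set of naturals, taken in increasing order
(well-defined without commutativity; agrees with the unordered product when the
factors pairwise commute). -/
def natFinsetProd {M : Type*} [Monoid M] (s : Finset ℕ) (f : ℕ → M) : M :=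
  ((s.sort (· ≤ ·)).map f).prod

/-- `(V,H,G)` is a hypergram: `V` a nonempty finite vertex set, `H` a set of
nonempty hyperedges covering `V`, `G` a set of 2-element edges on `V` forming a
simple reduced graph, no edge of `G` being contained in a hyperedge of `H`. -/
def IsHypergram (V : Finset ℕ) (H G : Finset (Finset ℕ)) : Prop :=
  V.Nonempty ∧
  (∀ h ∈ H, h ⊆ V ∧ h.Nonempty) ∧
  (∀ v ∈ V, ∃ h ∈ H, v ∈ h) ∧
  (∀ e ∈ G, e ⊆ V ∧ e.card = 2) ∧
  (∀ v ∈ V, ∃ e ∈ G, v ∈ e) ∧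
  (∀ v ∈ V, ∀ w ∈ V,
    (∀ u ∈ V, (({v, u} : Finset ℕ) ∈ G ↔ ({w, u} : Finset ℕ) ∈ G)) → v = w) ∧
  (∀ e ∈ G, ∀ h ∈ H, ¬ e ⊆ h)

/-- `α` is an `n`-qubit Pauli assignment of the hypergram `(V,H,G)`. -/
def IsPauliAssignment (V : Finset ℕ) (H G : Finset (Finset ℕ)) (n : ℕ)
    (α : ℕ → QMat n) : Prop :=
  (∀ v ∈ V, IsPauliObs n (α v)) ∧
  (∀ v ∈ V, α v ≠ idN n) ∧
  (∀ v₁ ∈ V, ∀ v₂ ∈ V, α v₁ = α v₂ → v₁ = v₂) ∧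
  (∀ v₁ ∈ V, ∀ v₂ ∈ V, v₁ ≠ v₂ →
    (α v₁ * α v₂ = -(α v₂ * α v₁) ↔ ({v₁, v₂} : Finset ℕ) ∈ G)) ∧
  (∀ h ∈ H, natFinsetProd h α = idN n ∨ natFinsetProd h α = -(idN n))

/-- The sign `sgn_α(h) ∈ {−1,1}` of a hyperedge `h`: `∏_{v∈h} α(v) = sgn_α(h)·I^⊗n`. -/
def quantumSgn {n : ℕ} (α : ℕ → QMat n) (h : Finset ℕ) : ℤ :=
  if natFinsetProd h α = idN n then 1 else -1

/-- The sign `sgn_a(h) = ∏_{v∈h} a(v)` of a hyperedge for a classical assignment. -/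
def classicalSgn (a : ℕ → ℤ) (h : Finset ℕ) : ℤ := ∏ v ∈ h, a v

/-- The contextuality degree of a Pauli assignment: the minimum over classical
assignments `a : V → {−1,1}` of the number of hyperedges whose signs differ. -/
def contextualityDegree {n : ℕ} (H : Finset (Finset ℕ)) (α : ℕ → QMat n) : ℕ :=
  sInf { d : ℕ | ∃ a : ℕ → ℤ, (∀ v, a v = 1 ∨ a v = -1) ∧
    d = (H.filter (fun h => quantumSgn α h ≠ classicalSgn a h)).card }

/-- The context (incidence) matrix of a hypergram over 𝔽₂. -/
def contextMatrix (V : Finset ℕ) (H : Finset (Finset ℕ)) :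
    Matrix {h // h ∈ H} {v // v ∈ V} (ZMod 2) :=
  Matrix.of fun h v => if v.1 ∈ h.1 then 1 else 0

/-- The anticommutation (adjacency) matrix of a hypergram over 𝔽₂. -/
def anticommMatrix (V : Finset ℕ) (G : Finset (Finset ℕ)) :
    Matrix {v // v ∈ V} {v // v ∈ V} (ZMod 2) :=
  Matrix.of fun i j => if ({i.1, j.1} : Finset ℕ) ∈ G then 1 else 0

/-- The standard symplectic form on `𝔽₂^{2n}`:
`⟨x,y⟩ = Σ_{k=1}^{n} (x_{2k−1} y_{2k} + x_{2k} y_{2k−1})`. -/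
def sympForm (n : ℕ) (x y : Fin (2 * n) → ZMod 2) : ZMod 2 :=
  ∑ k : Fin n,
    (x ⟨2 * k.1, by have := k.2; omega⟩ * y ⟨2 * k.1 + 1, by have := k.2; omega⟩ +
     x ⟨2 * k.1 + 1, by have := k.2; omega⟩ * y ⟨2 * k.1, by have := k.2; omega⟩)

/-- The single-qubit encoding `ψ(I)=(0,0), ψ(X)=(0,1), ψ(Y)=(1,1), ψ(Z)=(1,0)`. -/
def psi4 : Fin 4 → (ZMod 2) × (ZMod 2)
  | ⟨0, _⟩ => (0, 0)
  | ⟨1, _⟩ => (0, 1)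
  | ⟨2, _⟩ => (1, 1)
  | ⟨3, _⟩ => (1, 0)

/-- The encoding `ψ` of an `n`-qubit Pauli observable (given by its tensor
factors `g`) as a vector of `𝔽₂^{2n}`, concatenating the per-factor encodings. -/
def psiVec {n : ℕ} (g : Fin n → Fin 4) : Fin (2 * n) → ZMod 2 := fun idx =>
  if idx.1 % 2 = 0 then (psi4 (g ⟨idx.1 / 2, by have := idx.2; omega⟩)).1
  else (psi4 (g ⟨idx.1 / 2, by have := idx.2; omega⟩)).2

/-- All pairs of elements of `S` commute. -/
def PairComm {n : ℕ} (S : Finset (QMat n)) : Prop := ∀ a ∈ S, ∀ b ∈ S, a * b = b * a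

/-- The (well-defined) product of a finite set of pairwise commuting matrices. -/
def commProd {n : ℕ} (S : Finset (QMat n)) (h : PairComm S) : QMat n :=
  S.noncommProd id (fun a ha b hb _ => h a ha b hb)

/-- Pairwise commutation is inherited by subsets. -/
def pairCommOfSubset {n : ℕ} {S T : Finset (QMat n)} (hST : S ⊆ T) (h : PairComm T) :
    PairComm S := fun a ha b hb => h a (hST ha) b (hST hb)

/-- `Q` (pairwise commuting) is independent: no nonempty subset has product `±I^⊗n`. -/
def IsIndep {n : ℕ} (Q : Finset (QMat n)) (hQ : PairComm Q) : Prop :=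
  ∀ S : Finset (QMat n), ∀ (hS : S ⊆ Q), S.Nonempty →
    commProd S (pairCommOfSubset hS hQ) ≠ idN n ∧
    commProd S (pairCommOfSubset hS hQ) ≠ -(idN n)

/-- The vertex set `{1, …, 15}`. -/
def V15 : Finset ℕ := Finset.Icc 1 15

/-- The 15 lines of the doily. -/
def doilyLines : Finset (Finset ℕ) :=
  { {1,2,3}, {1,8,9}, {1,10,11}, {2,4,6}, {2,5,7}, {3,12,15}, {3,13,14},
    {4,8,12}, {4,10,14}, {5,8,13}, {5,10,15}, {6,9,15}, {6,11,13},
    {7,9,14}, {7,11,12} }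

/-- The 10 lines of the two-spread `H_{2s}`. -/
def twoSpreadLines : Finset (Finset ℕ) :=
  { {1,2,3}, {1,10,11}, {2,4,6}, {3,13,14}, {4,8,12}, {5,8,13}, {5,10,15},
    {6,9,15}, {7,9,14}, {7,11,12} }

/-- The anticommutation graph `G_d = G_{2s}`: pairs of distinct vertices not on a
common doily line. -/
def doilyG : Finset (Finset ℕ) :=
  (V15.powersetCard 2).filter (fun e => ∀ h ∈ doilyLines, ¬ e ⊆ h)


lemma sympForm_add_right (n : ℕ) (x y z : Fin (2*n) → ZMod 2) :
    sympForm n x (y + z) = sympForm n x y + sympForm n x z := by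
  unfold sympForm
  rw [← Finset.sum_add_distrib]
  apply Finset.sum_congr rfl; intros; simp [Pi.add_apply]; ring

lemma sympForm_smul_right (n : ℕ) (c : ZMod 2) (x y : Fin (2*n) → ZMod 2) :
    sympForm n x (c • y) = c * sympForm n x y := by
  simp only [sympForm, Finset.mul_sum, Pi.smul_apply, smul_eq_mul]
  apply Finset.sum_congr rfl; intros; ring

lemma sympForm_sum_left {ι : Type*} (n : ℕ) (s : Finset ι) (x : ι → Fin (2*n) → ZMod 2)
    (y : Fin (2*n) → ZMod 2) :
    sympForm n (∑ i ∈ s, x i) y = ∑ i ∈ s, sympForm n (x i) y := by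
  simp only [sympForm, Finset.sum_apply, Finset.sum_mul, ← Finset.sum_add_distrib]
  exact Finset.sum_comm

def sympL (n : ℕ) (x : Fin (2*n) → ZMod 2) : (Fin (2*n) → ZMod 2) →ₗ[ZMod 2] ZMod 2 where
  toFun y := sympForm n x y
  map_add' := sympForm_add_right n x
  map_smul' c y := sympForm_smul_right n c x y

lemma sympForm_single (n : ℕ) (s : Fin (2*n) → ZMod 2) (k : Fin n) :
    sympForm n s (Pi.single (⟨2*k.1+1, by have := k.2; omega⟩ : Fin (2*n)) 1) =
      s ⟨2*k.1, by have := k.2; omega⟩ ∧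
    sympForm n s (Pi.single (⟨2*k.1, by have := k.2; omega⟩ : Fin (2*n)) 1) =
      s ⟨2*k.1+1, by have := k.2; omega⟩ := by
  constructor <;>
  · rw [sympForm, Finset.sum_eq_single k]
    · simp [Pi.single_apply, Fin.ext_iff]
    · intro b _ hb
      have hb' : b.1 ≠ k.1 := fun h => hb (Fin.ext h)
      simp only [Pi.single_apply, Fin.ext_iff]
      rw [if_neg (by omega), if_neg (by omega)]
      ring
    · simp

lemma sympForm_nondeg (n : ℕ) (s : Fin (2*n) → ZMod 2)
    (hs : ∀ y, sympForm n s y = 0) : s = 0 := by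
  funext idx
  rcases Nat.even_or_odd idx.1 with ⟨k, hk⟩ | ⟨k, hk⟩
  · have hkn : k < n := by have := idx.2; omega
    have h1 := (sympForm_single n s ⟨k, hkn⟩).1
    rw [hs] at h1
    have hidx : idx = (⟨2*k, by omega⟩ : Fin (2*n)) := Fin.ext (by simp; omega)
    rw [hidx]; exact h1.symm
  · have hkn : k < n := by have := idx.2; omega
    have h1 := (sympForm_single n s ⟨k, hkn⟩).2
    rw [hs] at h1
    have hidx : idx = (⟨2*k+1, by omega⟩ : Fin (2*n)) := Fin.ext (by simp; omega)
    rw [hidx]; exact h1.symm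


/-- For a hypergram satisfying the assignability condition, any
symplectic Gram realization of the anticommutation matrix sums to zero on every
hyperedge. -/
theorem gram_realization_sums_zero_on_hyperedges
    (V : Finset ℕ) (H G : Finset (Finset ℕ)) (hgram : IsHypergram V H G) (n : ℕ)
    (hzero : contextMatrix V H * anticommMatrix V G = 0)
    (hrank : (anticommMatrix V G).rank = 2 * n)
    (x : ℕ → Fin (2 * n) → ZMod 2)
    (hx : ∀ i (hi : i ∈ V), ∀ j (hj : j ∈ V),
      sympForm n (x i) (x j) = anticommMatrix V G ⟨i, hi⟩ ⟨j, hj⟩) :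
    ∀ h ∈ H, (∑ v ∈ h, x v) = 0 := by
  intro h hH
  set a : ℕ → ℕ → ZMod 2 := fun i j => if ({i, j} : Finset ℕ) ∈ G then 1 else 0 with ha
  have hA : ∀ (i : {v // v ∈ V}) (j : {v // v ∈ V}),
      anticommMatrix V G i j = a i.1 j.1 := fun i j => rfl
  have hsub : h ⊆ V := (hgram.2.1 h hH).1
  -- Step A: the hyperedge sum is orthogonal to every x j, j ∈ V
  have sorth : ∀ j ∈ V, sympForm n (∑ v ∈ h, x v) (x j) = 0 := by
    intro j hj
    rw [sympForm_sum_left]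
    have h1 : ∑ v ∈ h, sympForm n (x v) (x j) = ∑ v ∈ h, a v j := by
      apply Finset.sum_congr rfl
      intro v hv
      rw [hx v (hsub hv) j hj, hA]
    rw [h1]
    have h2 := congrFun (congrFun hzero ⟨h, hH⟩) ⟨j, hj⟩
    simp only [Matrix.mul_apply, Matrix.zero_apply, contextMatrix, anticommMatrix,
      Matrix.of_apply, ite_mul, one_mul, zero_mul] at h2
    have h3 : ∑ v : {v // v ∈ V}, (if v.1 ∈ h then a v.1 j else 0) = 0 := h2
    rw [Finset.sum_coe_sort V (fun v => if v ∈ h then a v j else 0)] at h3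
    rw [Finset.sum_ite_mem, Finset.inter_eq_right.2 hsub] at h3
    exact h3
  -- Step B: the x j, j ∈ V, span the whole space
  set T : ({v // v ∈ V} → ZMod 2) →ₗ[ZMod 2] (Fin (2*n) → ZMod 2) :=
    Fintype.linearCombination (ZMod 2) (fun v : {v // v ∈ V} => x v.1) with hT
  set Gm : (Fin (2*n) → ZMod 2) →ₗ[ZMod 2] ({v // v ∈ V} → ZMod 2) :=
    LinearMap.pi (fun i : {v // v ∈ V} => sympL n (x i.1)) with hGm
  have hfact : (anticommMatrix V G).mulVecLin = Gm.comp T := by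
    apply LinearMap.ext
    intro c
    funext i
    show (anticommMatrix V G).mulVec c i = sympL n (x i.1) (T c)
    rw [hT, Fintype.linearCombination_apply, map_sum]
    simp only [sympL, LinearMap.coe_mk, AddHom.coe_mk, sympForm_smul_right]
    rw [Matrix.mulVec]
    simp only [dotProduct]
    apply Finset.sum_congr rfl
    intro j _
    rw [hx i.1 i.2 j.1 j.2]
    ring
  have hrange : LinearMap.range T = ⊤ := by
    have hle : Module.finrank (ZMod 2) (LinearMap.range ((anticommMatrix V G).mulVecLin))
        ≤ Module.finrank (ZMod 2) (LinearMap.range T) := by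
      rw [hfact, LinearMap.range_comp]
      exact Submodule.finrank_map_le Gm (LinearMap.range T)
    have hr : (anticommMatrix V G).rank
        = Module.finrank (ZMod 2) (LinearMap.range ((anticommMatrix V G).mulVecLin)) := rfl
    rw [← hr, hrank] at hle
    have htop : Module.finrank (ZMod 2) (Fin (2*n) → ZMod 2) = 2 * n := by
      simp [Module.finrank_pi]
    apply Submodule.eq_top_of_finrank_eq
    have hle2 := Submodule.finrank_le (LinearMap.range T)
    rw [htop] at hle2
    omega
  -- Step C: conclude
  apply sympForm_nondeg
  intro y
  have hy : y ∈ LinearMap.range T := by rw [hrange]; trivial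
  obtain ⟨c, hc⟩ := hy
  rw [← hc]
  have : T c = ∑ j : {v // v ∈ V}, c j • x j.1 := rfl
  rw [this]
  have hmap : sympForm n (∑ v ∈ h, x v) (∑ j : {v // v ∈ V}, c j • x j.1)
      = ∑ j : {v // v ∈ V}, sympL n (∑ v ∈ h, x v) (c j • x j.1) := by
    rw [← map_sum]; rfl
  rw [hmap]
  apply Finset.sum_eq_zero
  intro j _
  show sympForm n (∑ v ∈ h, x v) (c j • x j.1) = 0
  rw [sympForm_smul_right, sorth j.1 j.2, mul_zero]


end
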